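/- Let S be a step set satisfying Hypothesis (H), let i₀ ≥ 0, and let c_{i,j}(n) count n-step S-walks in the three-quadrant cone C starting at (i₀,i₀) and ending at (i,j). Then the following identity of formal power series in t, with coefficients in ℚ[x, x^{−1}, y, y^{−1}], holds: D̂(x,y) = x^{i₀} y^{i₀} + t(δ_{1,1}xy + δ_{−1,−1}x^{−1}y^{−1})·D̂(x,y) − t·δ_{−1,−1}·x^{−1}y^{−1}·D̂(0,0) + 2t(δ_{−1,0}x^{−1} + δ_{0,1}y)·D̂^ℓ(x,y) − 2t·δ_{−1,0}·x^{−1}y^{−1}·Σ_{n≥0} c_{0,−1}(n) t^n. -/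

import Mathlib

open scoped BigOperators

/-- The three-quadrant cone `𝒞 = {(i,j) ∈ ℤ² : i ≥ 0 or j ≥ 0}`. -/
def cone : Set (ℤ × ℤ) := {p | 0 ≤ p.1 ∨ 0 ≤ p.2}

/-- `walkCount S R p₀ n q`: the number of `n`-step walks with steps in `S`, all of whose
points lie in the region `R`, starting at `p₀` and ending at `q`. -/
noncomputable def walkCount (S : Finset (ℤ × ℤ)) (R : Set (ℤ × ℤ)) (p₀ : ℤ × ℤ)
    (n : ℕ) (q : ℤ × ℤ) : ℕ :=
  Nat.card {w : Fin (n + 1) → ℤ × ℤ //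
    w 0 = p₀ ∧ w (Fin.last n) = q ∧ (∀ k, w k ∈ R) ∧
    ∀ k : Fin n, w k.succ - w k.castSucc ∈ S}

/-- Laurent polynomials in the two variables `x, y`, with rational coefficients. -/
abbrev LP : Type := AddMonoidAlgebra ℚ (ℤ × ℤ)

/-- The Laurent monomial `x^i y^j`. -/
noncomputable def mono (v : ℤ × ℤ) : LP := AddMonoidAlgebra.single v 1

/-- Formal power series in `t` with Laurent-polynomial coefficients. -/
abbrev PS : Type := PowerSeries LP

noncomputable def CL : LP →+* PS := (PowerSeries.C : LP →+* PS)

/-- The series variable `t`. -/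
noncomputable def T : PS := PowerSeries.X

/-- The rational constant `1/2`. -/
noncomputable def half : PS := (PowerSeries.C : LP →+* PS) (algebraMap ℚ LP (1/2))

/-- The points reachable from `p₀` in at most `n` small steps. -/
noncomputable def box (p₀ : ℤ × ℤ) (n : ℕ) : Finset (ℤ × ℤ) :=
  Finset.Icc (p₀.1 - n, p₀.2 - n) (p₀.1 + n, p₀.2 + n)

/-- The diagonal starting point `(i₀, i₀)`. -/
def start (i₀ : ℕ) : ℤ × ℤ := ((i₀ : ℤ), (i₀ : ℤ))


section WalkAux

def IsWalk (S : Finset (ℤ × ℤ)) (R : Set (ℤ × ℤ)) (p₀ : ℤ × ℤ) (n : ℕ) (q : ℤ × ℤ)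
    (w : Fin (n + 1) → ℤ × ℤ) : Prop :=
  w 0 = p₀ ∧ w (Fin.last n) = q ∧ (∀ k, w k ∈ R) ∧
    ∀ k : Fin n, w k.succ - w k.castSucc ∈ S

variable {S : Finset (ℤ × ℤ)} {R : Set (ℤ × ℤ)} {p₀ q : ℤ × ℤ} {n : ℕ}

lemma walkCount_eq : walkCount S R p₀ n q = Nat.card {w // IsWalk S R p₀ n q w} := rfl

lemma walk_mem_box (hS : S ⊆ Finset.Icc (-1, -1) (1, 1)) {w : Fin (n + 1) → ℤ × ℤ}
    (hw : IsWalk S R p₀ n q w) (k : Fin (n + 1)) : w k ∈ box p₀ n := by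
  obtain ⟨h0, -, -, hstep⟩ := hw
  have key : ∀ m : ℕ, ∀ hm : m < n + 1, p₀.1 - m ≤ (w ⟨m, hm⟩).1 ∧ (w ⟨m, hm⟩).1 ≤ p₀.1 + m ∧
      p₀.2 - m ≤ (w ⟨m, hm⟩).2 ∧ (w ⟨m, hm⟩).2 ≤ p₀.2 + m := by
    intro m
    induction m with
    | zero =>
      intro hm
      have h : (⟨0, hm⟩ : Fin (n + 1)) = 0 := rfl
      rw [h, h0]; push_cast; omega
    | succ m ih =>
      intro hm
      have hm' : m < n + 1 := by omega
      have hmn : m < n := by omega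
      have hs := hS (hstep ⟨m, hmn⟩)
      rw [Finset.mem_Icc, Prod.le_def, Prod.le_def] at hs
      have e1 : (⟨m, hmn⟩ : Fin n).succ = (⟨m + 1, hm⟩ : Fin (n + 1)) := rfl
      have e2 : (⟨m, hmn⟩ : Fin n).castSucc = (⟨m, hm'⟩ : Fin (n + 1)) := rfl
      rw [e1, e2, Prod.fst_sub, Prod.snd_sub] at hs
      have := ih hm'
      push_cast at this ⊢
      simp only [Prod.fst_sub, Prod.snd_sub] at hs
      omega
  have hk := key k.val k.isLt
  rw [Fin.eta] at hk
  have : (k : ℕ) ≤ n := by omega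
  simp only [box, Finset.mem_Icc, Prod.le_def]
  constructor <;> constructor <;> omega

lemma walk_finite (hS : S ⊆ Finset.Icc (-1, -1) (1, 1)) :
    {w : Fin (n + 1) → ℤ × ℤ | IsWalk S R p₀ n q w}.Finite := by
  rw [← Set.finite_coe_iff]
  let f : {w // IsWalk S R p₀ n q w} → (Fin (n + 1) → (box p₀ n : Finset (ℤ × ℤ))) :=
    fun w k => ⟨w.1 k, walk_mem_box hS w.2 k⟩
  have hf : Function.Injective f := by
    intro a b hab
    apply Subtype.ext
    funext k
    have := congrFun hab k
    simpa [f, Subtype.ext_iff] using this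
  exact Finite.of_injective f hf

lemma walkCount_eq_card (hfin : {w : Fin (n + 1) → ℤ × ℤ | IsWalk S R p₀ n q w}.Finite) :
    walkCount S R p₀ n q = hfin.toFinset.card := by
  rw [walkCount_eq]
  exact (Nat.card_coe_set_eq _).trans (Set.ncard_eq_toFinset_card _ hfin)

lemma walkCount_eq_zero_of_not_mem (hq : q ∉ R) : walkCount S R p₀ n q = 0 := by
  rw [walkCount_eq]
  have : IsEmpty {w // IsWalk S R p₀ n q w} :=
    ⟨fun w => hq (w.2.2.1 ▸ w.2.2.2.1 (Fin.last n))⟩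
  exact Nat.card_of_isEmpty

lemma walkCount_eq_zero_of_not_mem_box (hS : S ⊆ Finset.Icc (-1, -1) (1, 1))
    (hq : q ∉ box p₀ n) : walkCount S R p₀ n q = 0 := by
  rw [walkCount_eq]
  have : IsEmpty {w // IsWalk S R p₀ n q w} :=
    ⟨fun w => hq (w.2.2.1 ▸ walk_mem_box hS w.2 (Fin.last n))⟩
  exact Nat.card_of_isEmpty

lemma walkCount_zero_self (hR : p₀ ∈ R) : walkCount S R p₀ 0 p₀ = 1 := by
  rw [walkCount_eq]
  have : Unique {w // IsWalk S R p₀ 0 p₀ w} := by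
    refine ⟨⟨⟨fun _ => p₀, rfl, rfl, fun _ => hR, fun k => k.elim0⟩⟩, ?_⟩
    rintro ⟨w, h0, -, -, -⟩
    apply Subtype.ext
    funext k
    show w k = p₀
    rw [Fin.fin_one_eq_zero k, h0]
  exact Nat.card_unique

lemma walkCount_zero_ne (hq : q ≠ p₀) : walkCount S R p₀ 0 q = 0 := by
  rw [walkCount_eq]
  have : IsEmpty {w // IsWalk S R p₀ 0 q w} := by
    refine ⟨fun w => hq ?_⟩
    obtain ⟨h0, hl, -, -⟩ := w.2
    rw [← hl, show Fin.last 0 = 0 from rfl, h0]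
  exact Nat.card_of_isEmpty

lemma walkCount_succ (hS : S ⊆ Finset.Icc (-1, -1) (1, 1)) (hq : q ∈ R) :
    walkCount S R p₀ (n + 1) q = ∑ s ∈ S, walkCount S R p₀ n (q - s) := by
  have fin1 : {w : Fin (n + 2) → ℤ × ℤ | IsWalk S R p₀ (n + 1) q w}.Finite := walk_finite hS
  have fin2 : ∀ s : ℤ × ℤ, {w : Fin (n + 1) → ℤ × ℤ | IsWalk S R p₀ n (q - s) w}.Finite :=
    fun s => walk_finite hS
  rw [walkCount_eq_card fin1]
  have hsum : ∀ s ∈ S, walkCount S R p₀ n (q - s) = ((fin2 s).toFinset).card :=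
    fun s _ => walkCount_eq_card (fin2 s)
  rw [Finset.sum_congr rfl hsum]
  have hmap : ∀ w ∈ fin1.toFinset,
      (w (Fin.last (n + 1)) - w (Fin.castSucc (Fin.last n))) ∈ S := by
    intro w hw
    rw [Set.Finite.mem_toFinset] at hw
    have := hw.2.2.2 (Fin.last n)
    rwa [Fin.succ_last] at this
  rw [Finset.card_eq_sum_card_fiberwise hmap]
  refine Finset.sum_congr rfl fun s hs => ?_
  refine Finset.card_bij' (fun w _ => Fin.init w) (fun w' _ => Fin.snoc w' q) ?_ ?_ ?_ ?_
  · -- init w is a walk to q - s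
    intro w hw
    rw [Finset.mem_filter, Set.Finite.mem_toFinset] at hw
    obtain ⟨⟨h0, hl, hR, hstep⟩, hfib⟩ := hw
    rw [Set.Finite.mem_toFinset]
    refine ⟨?_, ?_, fun k => hR _, fun k => ?_⟩
    · show w (Fin.castSucc 0) = p₀
      rwa [Fin.castSucc_zero]
    · show w (Fin.castSucc (Fin.last n)) = q - s
      rw [← hfib, hl]; ring
    · show w (Fin.castSucc k.succ) - w (Fin.castSucc k.castSucc) ∈ S
      have e1 : Fin.castSucc k.succ = (Fin.castSucc k).succ := (Fin.succ_castSucc k).symm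
      have e2 : Fin.castSucc k.castSucc = (Fin.castSucc k).castSucc := rfl
      rw [e1, e2]
      exact hstep (Fin.castSucc k)
  · -- snoc w' q is a walk in the fiber
    intro w' hw'
    rw [Set.Finite.mem_toFinset] at hw'
    obtain ⟨h0, hl, hR, hstep⟩ := hw'
    rw [Finset.mem_filter, Set.Finite.mem_toFinset]
    beta_reduce
    have hlast : (Fin.snoc w' q : Fin (n + 2) → ℤ × ℤ) (Fin.last (n + 1)) = q := by simp
    have hcs : ∀ k : Fin (n + 1), (Fin.snoc w' q : Fin (n + 2) → ℤ × ℤ) (Fin.castSucc k) = w' k := by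
      intro k; simp
    refine ⟨⟨?_, hlast, ?_, ?_⟩, ?_⟩
    · exact (hcs 0).trans h0
    · intro k
      induction k using Fin.lastCases with
      | last => rw [hlast]; exact hq
      | cast k => rw [hcs]; exact hR k
    · intro k
      induction k using Fin.lastCases with
      | last =>
        rw [Fin.succ_last, hlast, hcs, hl]
        have : q - (q - s) = s := by ring
        rwa [this]
      | cast k =>
        rw [Fin.succ_castSucc, hcs, hcs]
        exact hstep k
    · rw [hlast, hcs, hl]; ring
  · intro w hw
    rw [Finset.mem_filter, Set.Finite.mem_toFinset] at hw
    beta_reduce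
    have h := Fin.snoc_init_self w
    rwa [hw.1.2.1] at h
  · intro w' _
    beta_reduce
    simp

lemma IsWalk.swap (hsym : ∀ s ∈ S, (s.2, s.1) ∈ S) (hp : (p₀.2, p₀.1) = p₀)
    {w : Fin (n + 1) → ℤ × ℤ} (hw : IsWalk S cone p₀ n q w) :
    IsWalk S cone p₀ n (q.2, q.1) fun k => ((w k).2, (w k).1) := by
  obtain ⟨h0, hl, hR, hstep⟩ := hw
  refine ⟨by simp only []; rw [h0, hp], by simp only []; rw [hl], fun k => ?_, fun k => ?_⟩
  · have := hR k; rw [cone, Set.mem_setOf_eq] at *; tauto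
  · have := hsym _ (hstep k)
    simpa [Prod.ext_iff, Prod.fst_sub, Prod.snd_sub] using this

lemma walkCount_swap (hsym : ∀ s ∈ S, (s.2, s.1) ∈ S) (hp : (p₀.2, p₀.1) = p₀) (a b : ℤ) :
    walkCount S cone p₀ n (a, b) = walkCount S cone p₀ n (b, a) := by
  rw [walkCount_eq, walkCount_eq]
  apply Nat.card_congr
  refine ⟨fun w => ⟨fun k => ((w.1 k).2, (w.1 k).1), w.2.swap hsym hp⟩,
          fun w => ⟨fun k => ((w.1 k).2, (w.1 k).1), w.2.swap hsym hp⟩, ?_, ?_⟩ <;>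
    intro w <;> apply Subtype.ext <;> funext k <;> rfl

end WalkAux

/-- The kernel `K(x,y) = xy (t ∑_{(i,j) ∈ S} x^i y^j - 1)`. -/
noncomputable def kerK (S : Finset (ℤ × ℤ)) : PS :=
  CL (mono (1, 1)) * (T * CL (∑ s ∈ S, mono s) - 1)

/-- `δ_v`: the indicator that the step `v` belongs to `S`. -/
noncomputable def dl (S : Finset (ℤ × ℤ)) (v : ℤ × ℤ) : PS := if v ∈ S then 1 else 0

/-- `L̂(x,y) = ∑_{n ≥ 0} ∑_{i ≥ 0, j ≤ i-1} c_{i,j}(n) x^i y^j t^n`: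
walks ending strictly below the diagonal (in the lower part). -/
noncomputable def Lhat (S : Finset (ℤ × ℤ)) (i₀ : ℕ) : PS :=
  PowerSeries.mk fun n =>
    ∑ p ∈ (box (start i₀) n).filter (fun p => 0 ≤ p.1 ∧ p.2 ≤ p.1 - 1),
      (walkCount S cone (start i₀) n p : LP) * mono p

/-- `Û(x,y) = ∑_{n ≥ 0} ∑_{j ≥ 0, i ≤ j-1} c_{i,j}(n) x^i y^j t^n`:
walks ending strictly above the diagonal (in the upper part). -/
noncomputable def Uhat (S : Finset (ℤ × ℤ)) (i₀ : ℕ) : PS :=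
  PowerSeries.mk fun n =>
    ∑ p ∈ (box (start i₀) n).filter (fun p => 0 ≤ p.2 ∧ p.1 ≤ p.2 - 1),
      (walkCount S cone (start i₀) n p : LP) * mono p

/-- `D̂(x,y) = ∑_{n ≥ 0} ∑_{i ≥ 0} c_{i,i}(n) x^i y^i t^n`: walks ending on the diagonal. -/
noncomputable def Dhat (S : Finset (ℤ × ℤ)) (i₀ : ℕ) : PS :=
  PowerSeries.mk fun n =>
    ∑ i ∈ Finset.Icc (0 : ℤ) ((i₀ : ℤ) + n),
      (walkCount S cone (start i₀) n (i, i) : LP) * mono (i, i)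

/-- `D̂^ℓ(x,y) = ∑_{n ≥ 0} ∑_{i ≥ 0} c_{i,i-1}(n) x^i y^{i-1} t^n`:
walks ending on the lower diagonal. -/
noncomputable def Dlow (S : Finset (ℤ × ℤ)) (i₀ : ℕ) : PS :=
  PowerSeries.mk fun n =>
    ∑ i ∈ Finset.Icc (0 : ℤ) ((i₀ : ℤ) + n),
      (walkCount S cone (start i₀) n (i, i - 1) : LP) * mono (i, i - 1)

/-- `L̂_{0-}(y⁻¹) = ∑_{n ≥ 0} ∑_{j < 0} c_{0,j}(n) y^j t^n`:
walks ending on the negative `y`-axis. -/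
noncomputable def L0minus (S : Finset (ℤ × ℤ)) (i₀ : ℕ) : PS :=
  PowerSeries.mk fun n =>
    ∑ j ∈ Finset.Icc ((i₀ : ℤ) - n) (-1),
      (walkCount S cone (start i₀) n (0, j) : LP) * mono (0, j)

/-- `D̂(0,0) = ∑_{n ≥ 0} c_{0,0}(n) t^n`: walks ending at the origin. -/
noncomputable def D00 (S : Finset (ℤ × ℤ)) (i₀ : ℕ) : PS :=
  PowerSeries.mk fun n => (walkCount S cone (start i₀) n (0, 0) : LP)

/-- `∑_{n ≥ 0} c_{0,-1}(n) t^n`: walks ending at `(0,-1)`. -/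
noncomputable def C0m1 (S : Finset (ℤ × ℤ)) (i₀ : ℕ) : PS :=
  PowerSeries.mk fun n => (walkCount S cone (start i₀) n (0, -1) : LP)

set_option maxHeartbeats 1000000 in
/-- The step-by-step construction equation for the diagonal generating function `D̂`,
for a symmetric model (Hypothesis (H)) started at the diagonal point `(i₀, i₀)`. -/
theorem construction_equation_diagonal
    (S : Finset (ℤ × ℤ)) (hS : S ⊆ (Finset.Icc (-1, -1) (1, 1)).erase (0, 0))
    (hsym : ∀ s ∈ S, (s.2, s.1) ∈ S)
    (hm : ((-1 : ℤ), (1 : ℤ)) ∉ S) (hp : ((1 : ℤ), (-1 : ℤ)) ∉ S)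
    (i₀ : ℕ) :
    Dhat S i₀ =
      CL (mono ((i₀ : ℤ), (i₀ : ℤ))) +
      T * (dl S (1, 1) * CL (mono (1, 1)) + dl S (-1, -1) * CL (mono (-1, -1))) * Dhat S i₀ -
      T * dl S (-1, -1) * CL (mono (-1, -1)) * D00 S i₀ +
      2 * T * (dl S (-1, 0) * CL (mono (-1, 0)) + dl S (0, 1) * CL (mono (0, 1))) *
        Dlow S i₀ -
      2 * T * dl S (-1, 0) * CL (mono (-1, -1)) * C0m1 S i₀ := by
  classical
  have hS' : S ⊆ Finset.Icc (-1, -1) (1, 1) := fun s hs => Finset.mem_of_mem_erase (hS hs)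
  have hstart : start i₀ ∈ cone := Or.inl (Int.natCast_nonneg i₀)
  have csymm : ∀ (m : ℕ) (a b : ℤ),
      walkCount S cone (start i₀) m (a, b) = walkCount S cone (start i₀) m (b, a) :=
    fun m a b => walkCount_swap hsym rfl a b
  have hS6 : S ⊆ ({(1,1), (-1,-1), (1,0), (0,1), (-1,0), (0,-1)} : Finset (ℤ × ℤ)) := by
    intro s hs
    have h1 := hS' hs
    rw [Finset.mem_Icc, Prod.le_def, Prod.le_def] at h1
    have h3 : s ≠ ((0 : ℤ), (0 : ℤ)) := Finset.ne_of_mem_erase (hS hs)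
    have h4 : s ≠ ((-1 : ℤ), (1 : ℤ)) := fun h => hm (h ▸ hs)
    have h5 : s ≠ ((1 : ℤ), (-1 : ℤ)) := fun h => hp (h ▸ hs)
    obtain ⟨a, b⟩ := s
    simp only [Finset.mem_insert, Finset.mem_singleton, Prod.mk.injEq, ne_eq] at h3 h4 h5 ⊢
    omega
  have hdl : ∀ v : ℤ × ℤ, dl S v = CL (if v ∈ S then 1 else 0) := by
    intro v; rw [dl]; split <;> simp [CL]
  have hmono : ∀ u v : ℤ × ℤ, mono u * mono v = mono (u + v) := by
    intro u v; simp [mono, AddMonoidAlgebra.single_mul_single]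
  have hiff1 : (((1 : ℤ), (0 : ℤ)) ∈ S) ↔ (((0 : ℤ), (1 : ℤ)) ∈ S) :=
    ⟨fun h => hsym _ h, fun h => hsym _ h⟩
  have hiff2 : (((0 : ℤ), (-1 : ℤ)) ∈ S) ↔ (((-1 : ℤ), (0 : ℤ)) ∈ S) :=
    ⟨fun h => hsym _ h, fun h => hsym _ h⟩
  have shift : ∀ (a b : ℤ) (f : ℤ → LP),
      ∑ j ∈ Finset.Icc (a + 1) (b + 1), f j = ∑ i ∈ Finset.Icc a b, f (i + 1) := by
    intro a b f
    rw [← Finset.map_add_right_Icc a b 1, Finset.sum_map]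
    rfl
  have main : Dhat S i₀ = CL (mono ((i₀ : ℤ), (i₀ : ℤ))) + T * (
      CL ((if ((1:ℤ),(1:ℤ)) ∈ S then 1 else 0) * mono (1,1)
          + (if ((-1:ℤ),(-1:ℤ)) ∈ S then 1 else 0) * mono (-1,-1)) * Dhat S i₀
      - CL ((if ((-1:ℤ),(-1:ℤ)) ∈ S then 1 else 0) * mono (-1,-1)) * D00 S i₀
      + CL (2 * ((if ((-1:ℤ),(0:ℤ)) ∈ S then 1 else 0) * mono (-1,0)
          + (if ((0:ℤ),(1:ℤ)) ∈ S then 1 else 0) * mono (0,1))) * Dlow S i₀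
      - CL (2 * ((if ((-1:ℤ),(0:ℤ)) ∈ S then 1 else 0) * mono (-1,-1))) * C0m1 S i₀) := by
    simp only [T, CL]
    refine PowerSeries.ext fun m => ?_
    rcases m with _ | n
    · rw [PowerSeries.coeff_zero_eq_constantCoeff]
      simp only [Dhat, map_add, map_mul, map_sub, PowerSeries.constantCoeff_X,
        PowerSeries.constantCoeff_C, zero_mul, mul_zero, add_zero, sub_zero,
        PowerSeries.constantCoeff_mk, Nat.cast_zero]
      rw [Finset.sum_eq_single (i₀ : ℤ)]
      · rw [show ((i₀ : ℤ), (i₀ : ℤ)) = start i₀ from rfl, walkCount_zero_self hstart]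
        simp
      · intro i hi hne
        have hne' : ((i, i) : ℤ × ℤ) ≠ start i₀ := by
          simp only [start, ne_eq, Prod.mk.injEq, not_and]
          exact fun h _ => hne h
        rw [walkCount_zero_ne hne']
        simp
      · intro h
        exact absurd (Finset.mem_Icc.mpr ⟨Int.natCast_nonneg i₀, by simp⟩) h
    · -- coefficient n + 1
      have hN0 : (0 : ℤ) ≤ (i₀ : ℤ) + (n : ℕ) := by positivity
      have hzbox : ∀ a b : ℤ, (i₀ : ℤ) + (n : ℕ) < a →
          walkCount S cone (start i₀) n (a, b) = 0 := by
        intro a b ha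
        apply walkCount_eq_zero_of_not_mem_box hS'
        simp only [box, Finset.mem_Icc, Prod.le_def, start, not_and, and_imp]
        intros; omega
      have hrec : ∀ i : ℤ, 0 ≤ i →
          ((walkCount S cone (start i₀) (n+1) (i,i) : ℕ) : LP) =
          (if ((1:ℤ),(1:ℤ)) ∈ S then ((walkCount S cone (start i₀) n (i-1,i-1) : ℕ) : LP) else 0)
        + (if ((-1:ℤ),(-1:ℤ)) ∈ S then ((walkCount S cone (start i₀) n (i+1,i+1) : ℕ) : LP) else 0)
        + 2 * (if ((0:ℤ),(1:ℤ)) ∈ S then ((walkCount S cone (start i₀) n (i,i-1) : ℕ) : LP) else 0)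
        + 2 * (if ((-1:ℤ),(0:ℤ)) ∈ S then ((walkCount S cone (start i₀) n (i+1,i) : ℕ) : LP) else 0) := by
        intro i hi
        rw [walkCount_succ hS' (Or.inl hi : ((i,i) : ℤ × ℤ) ∈ cone)]
        push_cast
        rw [show (∑ s ∈ S, ((walkCount S cone (start i₀) n ((i,i) - s) : ℕ) : LP))
            = ∑ s ∈ ({(1,1), (-1,-1), (1,0), (0,1), (-1,0), (0,-1)} : Finset (ℤ × ℤ)) ∩ S,
              ((walkCount S cone (start i₀) n ((i,i) - s) : ℕ) : LP) from by
          rw [Finset.inter_eq_right.mpr hS6]]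
        rw [← Finset.sum_ite_mem]
        rw [Finset.sum_insert (by decide), Finset.sum_insert (by decide),
          Finset.sum_insert (by decide), Finset.sum_insert (by decide),
          Finset.sum_insert (by decide), Finset.sum_singleton]
        rw [show ((i,i) : ℤ × ℤ) - (1,1) = (i-1, i-1) from by
            rw [Prod.mk_sub_mk],
          show ((i,i) : ℤ × ℤ) - (-1,-1) = (i+1, i+1) from by
            rw [Prod.mk_sub_mk]; congr 1 <;> ring,
          show ((i,i) : ℤ × ℤ) - (1,0) = (i-1, i) from by
            rw [Prod.mk_sub_mk]; congr 1 <;> ring,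
          show ((i,i) : ℤ × ℤ) - (0,1) = (i, i-1) from by
            rw [Prod.mk_sub_mk]; congr 1 <;> ring,
          show ((i,i) : ℤ × ℤ) - (-1,0) = (i+1, i) from by
            rw [Prod.mk_sub_mk]; congr 1 <;> ring,
          show ((i,i) : ℤ × ℤ) - (0,-1) = (i, i+1) from by
            rw [Prod.mk_sub_mk]; congr 1 <;> ring]
        rw [csymm n (i-1) i, csymm n i (i+1)]
        rw [show (if ((1:ℤ),(0:ℤ)) ∈ S then ((walkCount S cone (start i₀) n (i,i-1) : ℕ) : LP) else 0)
            = (if ((0:ℤ),(1:ℤ)) ∈ S then ((walkCount S cone (start i₀) n (i,i-1) : ℕ) : LP) else 0) from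
          if_congr hiff1 rfl rfl]
        rw [show (if ((0:ℤ),(-1:ℤ)) ∈ S then ((walkCount S cone (start i₀) n (i+1,i) : ℕ) : LP) else 0)
            = (if ((-1:ℤ),(0:ℤ)) ∈ S then ((walkCount S cone (start i₀) n (i+1,i) : ℕ) : LP) else 0) from
          if_congr hiff2 rfl rfl]
        ring
      have hIcc : Finset.Icc (0:ℤ) ((i₀ : ℤ) + ((n+1 : ℕ) : ℤ))
          = Finset.Icc (0:ℤ) (((i₀ : ℤ) + (n : ℕ)) + 1) := by
        congr 1 <;> push_cast <;> ring_nf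
      have hins : Finset.Icc (0:ℤ) ((i₀ : ℤ) + (n : ℕ)) =
          insert 0 (Finset.Icc 1 ((i₀ : ℤ) + (n : ℕ))) := by
        ext x
        simp only [Finset.mem_Icc, Finset.mem_insert]
        omega
      -- the four reindexing identities
      have e1 : ∑ i ∈ Finset.Icc (0:ℤ) (((i₀ : ℤ) + (n : ℕ)) + 1),
            ((walkCount S cone (start i₀) n (i-1,i-1) : ℕ) : LP) * mono (i,i)
          = mono (1,1) * ∑ i ∈ Finset.Icc (0:ℤ) ((i₀ : ℤ) + (n : ℕ)),
            ((walkCount S cone (start i₀) n (i,i) : ℕ) : LP) * mono (i,i) := by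
        rw [show Finset.Icc (0:ℤ) (((i₀ : ℤ) + (n : ℕ)) + 1)
            = Finset.Icc ((-1:ℤ) + 1) (((i₀ : ℤ) + (n : ℕ)) + 1) from by norm_num, shift]
        rw [← Finset.sum_subset (Finset.Icc_subset_Icc (by norm_num) le_rfl :
            Finset.Icc (0:ℤ) ((i₀ : ℤ) + (n : ℕ)) ⊆ Finset.Icc (-1) ((i₀ : ℤ) + (n : ℕ)))
          (fun x hx hx' => ?_)]
        · rw [Finset.mul_sum]
          refine Finset.sum_congr rfl fun i _ => ?_
          rw [show i + 1 - 1 = i from by ring, mul_left_comm, hmono,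
            show ((1:ℤ),(1:ℤ)) + (i,i) = (i+1, i+1) from by
              rw [Prod.mk_add_mk]; congr 1 <;> ring]
        · rw [Finset.mem_Icc] at hx hx'
          have : x = -1 := by omega
          subst this
          rw [show (-1 : ℤ) + 1 - 1 = -1 from by ring,
            walkCount_eq_zero_of_not_mem (by simp [cone])]
          simp
      have e2 : ∑ i ∈ Finset.Icc (0:ℤ) (((i₀ : ℤ) + (n : ℕ)) + 1),
            ((walkCount S cone (start i₀) n (i+1,i+1) : ℕ) : LP) * mono (i,i)
          = mono (-1,-1) * (∑ i ∈ Finset.Icc (0:ℤ) ((i₀ : ℤ) + (n : ℕ)),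
              ((walkCount S cone (start i₀) n (i,i) : ℕ) : LP) * mono (i,i))
            - mono (-1,-1) * ((walkCount S cone (start i₀) n (0,0) : ℕ) : LP) := by
        have h1 : ∑ j ∈ Finset.Icc (1:ℤ) (((i₀ : ℤ) + (n : ℕ)) + 2),
              ((walkCount S cone (start i₀) n (j,j) : ℕ) : LP) * mono (j-1,j-1)
            = ∑ i ∈ Finset.Icc (0:ℤ) (((i₀ : ℤ) + (n : ℕ)) + 1),
              ((walkCount S cone (start i₀) n (i+1,i+1) : ℕ) : LP) * mono (i,i) := by
          rw [show Finset.Icc (1:ℤ) (((i₀ : ℤ) + (n : ℕ)) + 2)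
              = Finset.Icc ((0:ℤ) + 1) ((((i₀ : ℤ) + (n : ℕ)) + 1) + 1) from by
                congr 1 <;> ring, shift]
          refine Finset.sum_congr rfl fun i _ => ?_
          rw [show i + 1 - 1 = i from by ring]
        rw [← h1, ← Finset.sum_subset (Finset.Icc_subset_Icc le_rfl (by omega) :
            Finset.Icc (1:ℤ) ((i₀ : ℤ) + (n : ℕ)) ⊆ Finset.Icc 1 (((i₀ : ℤ) + (n : ℕ)) + 2))
          (fun x hx hx' => ?_)]
        · rw [show (∑ i ∈ Finset.Icc (0:ℤ) ((i₀ : ℤ) + (n : ℕ)),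
              ((walkCount S cone (start i₀) n (i,i) : ℕ) : LP) * mono (i,i))
              = ((walkCount S cone (start i₀) n (0,0) : ℕ) : LP) * mono (0,0)
                + ∑ i ∈ Finset.Icc (1:ℤ) ((i₀ : ℤ) + (n : ℕ)),
                  ((walkCount S cone (start i₀) n (i,i) : ℕ) : LP) * mono (i,i) from by
            rw [hins, Finset.sum_insert (by simp)]]
          rw [mul_add, Finset.mul_sum]
          rw [show mono (-1,-1) * (((walkCount S cone (start i₀) n (0,0) : ℕ) : LP) * mono (0,0))
              = mono (-1,-1) * ((walkCount S cone (start i₀) n (0,0) : ℕ) : LP) from by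
            rw [mul_comm ((walkCount S cone (start i₀) n (0,0) : ℕ) : LP) (mono (0,0)),
              ← mul_assoc, mul_comm (mono (-1,-1)) (mono (0,0)), hmono,
              show ((0:ℤ),(0:ℤ)) + (-1,-1) = ((-1 : ℤ), (-1 : ℤ)) from by
                rw [Prod.mk_add_mk]; congr 1 <;> ring, mul_comm]]
          rw [add_sub_cancel_left]
          refine Finset.sum_congr rfl fun j _ => ?_
          rw [mul_left_comm, hmono, show ((-1:ℤ),(-1:ℤ)) + (j,j) = (j-1, j-1) from by
            rw [Prod.mk_add_mk]; congr 1 <;> ring]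
        · rw [Finset.mem_Icc] at hx hx'
          rw [hzbox x x (by omega)]
          simp
      have e3 : ∑ i ∈ Finset.Icc (0:ℤ) (((i₀ : ℤ) + (n : ℕ)) + 1),
            ((walkCount S cone (start i₀) n (i,i-1) : ℕ) : LP) * mono (i,i)
          = mono (0,1) * ∑ i ∈ Finset.Icc (0:ℤ) ((i₀ : ℤ) + (n : ℕ)),
            ((walkCount S cone (start i₀) n (i,i-1) : ℕ) : LP) * mono (i,i-1) := by
        rw [← Finset.sum_subset (Finset.Icc_subset_Icc le_rfl (by omega) :
            Finset.Icc (0:ℤ) ((i₀ : ℤ) + (n : ℕ)) ⊆ Finset.Icc 0 (((i₀ : ℤ) + (n : ℕ)) + 1))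
          (fun x hx hx' => ?_)]
        · rw [Finset.mul_sum]
          refine Finset.sum_congr rfl fun i _ => ?_
          rw [mul_left_comm, hmono, show ((0:ℤ),(1:ℤ)) + (i,i-1) = (i, i) from by
            rw [Prod.mk_add_mk]; congr 1 <;> ring]
        · rw [Finset.mem_Icc] at hx hx'
          rw [hzbox x (x - 1) (by omega)]
          simp
      have e4 : ∑ i ∈ Finset.Icc (0:ℤ) (((i₀ : ℤ) + (n : ℕ)) + 1),
            ((walkCount S cone (start i₀) n (i+1,i) : ℕ) : LP) * mono (i,i)
          = mono (-1,0) * (∑ i ∈ Finset.Icc (0:ℤ) ((i₀ : ℤ) + (n : ℕ)),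
              ((walkCount S cone (start i₀) n (i,i-1) : ℕ) : LP) * mono (i,i-1))
            - mono (-1,-1) * ((walkCount S cone (start i₀) n (0,-1) : ℕ) : LP) := by
        have h1 : ∑ j ∈ Finset.Icc (1:ℤ) (((i₀ : ℤ) + (n : ℕ)) + 2),
              ((walkCount S cone (start i₀) n (j,j-1) : ℕ) : LP) * mono (j-1,j-1)
            = ∑ i ∈ Finset.Icc (0:ℤ) (((i₀ : ℤ) + (n : ℕ)) + 1),
              ((walkCount S cone (start i₀) n (i+1,i) : ℕ) : LP) * mono (i,i) := by
          rw [show Finset.Icc (1:ℤ) (((i₀ : ℤ) + (n : ℕ)) + 2)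
              = Finset.Icc ((0:ℤ) + 1) ((((i₀ : ℤ) + (n : ℕ)) + 1) + 1) from by
                congr 1 <;> ring, shift]
          refine Finset.sum_congr rfl fun i _ => ?_
          rw [show i + 1 - 1 = i from by ring]
        rw [← h1, ← Finset.sum_subset (Finset.Icc_subset_Icc le_rfl (by omega) :
            Finset.Icc (1:ℤ) ((i₀ : ℤ) + (n : ℕ)) ⊆ Finset.Icc 1 (((i₀ : ℤ) + (n : ℕ)) + 2))
          (fun x hx hx' => ?_)]
        · rw [show (∑ i ∈ Finset.Icc (0:ℤ) ((i₀ : ℤ) + (n : ℕ)),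
              ((walkCount S cone (start i₀) n (i,i-1) : ℕ) : LP) * mono (i,i-1))
              = ((walkCount S cone (start i₀) n (0,0-1) : ℕ) : LP) * mono (0,0-1)
                + ∑ i ∈ Finset.Icc (1:ℤ) ((i₀ : ℤ) + (n : ℕ)),
                  ((walkCount S cone (start i₀) n (i,i-1) : ℕ) : LP) * mono (i,i-1) from by
            rw [hins, Finset.sum_insert (by simp)]]
          rw [mul_add, Finset.mul_sum]
          rw [show mono (-1,0) * (((walkCount S cone (start i₀) n (0,0-1) : ℕ) : LP) * mono (0,0-1))
              = mono (-1,-1) * ((walkCount S cone (start i₀) n (0,-1) : ℕ) : LP) from by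
            rw [show ((0:ℤ),(0:ℤ)-1) = ((0:ℤ),(-1:ℤ)) from by congr 1,
              mul_comm ((walkCount S cone (start i₀) n (0,-1) : ℕ) : LP) (mono (0,-1)),
              ← mul_assoc, hmono,
              show ((-1:ℤ),(0:ℤ)) + (0,-1) = ((-1 : ℤ), (-1 : ℤ)) from by
                rw [Prod.mk_add_mk]; congr 1 <;> ring, mul_comm]]
          rw [add_sub_cancel_left]
          refine Finset.sum_congr rfl fun j _ => ?_
          rw [mul_left_comm, hmono, show ((-1:ℤ),(0:ℤ)) + (j,j-1) = (j-1, j-1) from by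
            rw [Prod.mk_add_mk]; congr 1 <;> ring]
        · rw [Finset.mem_Icc] at hx hx'
          rw [hzbox x (x - 1) (by omega)]
          simp
      -- extract coefficients
      simp only [Dhat, D00, Dlow, C0m1, map_add, map_sub, add_mul,
        PowerSeries.coeff_succ_X_mul, PowerSeries.coeff_C_mul, PowerSeries.coeff_mk,
        PowerSeries.coeff_C, Nat.succ_ne_zero, if_false, zero_add]
      rw [hIcc]
      rw [Finset.sum_congr rfl (fun i hi =>
        congrArg (· * mono (i,i)) (hrec i (Finset.mem_Icc.mp hi).1))]
      simp only [add_mul, Finset.sum_add_distrib, ite_mul, zero_mul, mul_assoc]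
      rw [← Finset.mul_sum, ← Finset.mul_sum]
      rw [Finset.sum_ite_irrel, Finset.sum_ite_irrel, Finset.sum_ite_irrel,
        Finset.sum_ite_irrel]
      simp only [Finset.sum_const_zero]
      rw [e1, e2, e3, e4]
      by_cases h1 : ((1:ℤ),(1:ℤ)) ∈ S <;> by_cases h2 : ((-1:ℤ),(-1:ℤ)) ∈ S <;>
        by_cases h3 : ((0:ℤ),(1:ℤ)) ∈ S <;> by_cases h4 : ((-1:ℤ),(0:ℤ)) ∈ S <;>
        simp only [h1, h2, h3, h4, if_true, if_false, map_add, add_mul,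
          PowerSeries.coeff_C_mul, PowerSeries.coeff_mk, one_mul, zero_mul] <;> ring
  simp only [hdl]
  conv_lhs => rw [main]
  simp only [map_add, map_mul, map_ofNat, T, CL]
  ring
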